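/- Let 𝒯 be a k-linear Hom-finite category with Serre functor S, let T ∈ 𝒯 with Γ = End_𝒯(T). Then the functor 𝒯(T,−) restricts to an equivalence from add(ST) to the category of injective finite dimensional right Γ-modules. -/

import Mathlib

noncomputable section
open CategoryTheory CategoryTheory.Limits

/-- `Ext^i_R(A,B)` vanishes. -/
def ExtVanish (R : Type) [Ring R] (A B : ModuleCat R) (i : ℕ) : Prop :=
  Subsingleton (((Ext ℤ (ModuleCat R) i).obj (Opposite.op A)).obj B)

variable (k : Type) [Field k]
variable (𝒯 : Type) [Category.{0} 𝒯] [Preadditive 𝒯]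

/-- The category is Hom-finite over `k`. -/
def HomFinite [CategoryTheory.Linear k 𝒯] : Prop :=
  ∀ X Y : 𝒯, FiniteDimensional k (X ⟶ Y)

/-- The right `End T`-module structure (by precomposition) on `T ⟶ X`. -/
instance endOppositeModule (T X : 𝒯) : Module (End T)ᵐᵒᵖ (T ⟶ X) where
  smul m a := m.unop ≫ a
  one_smul a := Category.id_comp a
  mul_smul m n a := by
    show (n.unop * m.unop) ≫ a = m.unop ≫ n.unop ≫ a
    show (m.unop ≫ n.unop) ≫ a = _
    simp
  smul_zero m := Limits.comp_zero
  smul_add m a b := Preadditive.comp_add _ _ _ _ _ _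
  add_smul m n a := Preadditive.add_comp _ _ _ _ _ _
  zero_smul a := Limits.zero_comp

/-- The `Γ`-linear map `𝒯(T,X) → 𝒯(T,Y)` induced by postcomposition with `f : X ⟶ Y`. -/
def postcompHom (T : 𝒯) {X Y : 𝒯} (f : X ⟶ Y) :
    (T ⟶ X) →ₗ[(End T)ᵐᵒᵖ] (T ⟶ Y) where
  toFun a := a ≫ f
  map_add' a b := Preadditive.add_comp _ _ _ _ _ _
  map_smul' m a := by
    show (m.unop ≫ a) ≫ f = m.unop ≫ (a ≫ f)
    simp

/-- The image of `X` under the functor `𝒯(T,-) : 𝒯 → Mod (End T)ᵐᵒᵖ`. -/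
def homMod (T X : 𝒯) : ModuleCat (End T)ᵐᵒᵖ := ModuleCat.of _ (T ⟶ X)

/-- Membership in `add T`: direct summand of a finite direct sum of copies of `T`. -/
def InAdd [HasFiniteBiproducts 𝒯] (T X : 𝒯) : Prop :=
  ∃ (n : ℕ) (s : X ⟶ biproduct (fun _ : Fin n => T))
    (r : biproduct (fun _ : Fin n => T) ⟶ X), s ≫ r = 𝟙 X

/-- `X` is indecomposable. -/
def Indecomposable' (X : 𝒯) : Prop :=
  ¬ Limits.IsZero X ∧ ∀ e : X ⟶ X, e ≫ e = e → e = 0 ∨ e = 𝟙 X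

/-- The functor `𝒯(T,-)` is full onto `Γ`-linear maps. -/
def HomFunctorFull (T : 𝒯) : Prop :=
  ∀ (X Y : 𝒯) (φ : (T ⟶ X) →ₗ[(End T)ᵐᵒᵖ] (T ⟶ Y)), ∃ g : X ⟶ Y, ∀ a, φ a = a ≫ g

/-- The essential image of `𝒯(T,-)` in `mod (End T)ᵐᵒᵖ`. -/
def EssIm (T : 𝒯) : Set (ModuleCat (End T)ᵐᵒᵖ) :=
  {M | ∃ X : 𝒯, Nonempty (M ≅ homMod 𝒯 T X)}

/-- A Serre functor: an autoequivalence `S` with binatural isomorphisms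
`𝒯(Y, SX) ≅ D 𝒯(X,Y)`. -/
structure SerreData [CategoryTheory.Linear k 𝒯] where
  S : 𝒯 ⥤ 𝒯
  equiv : S.IsEquivalence
  ε : ∀ X Y : 𝒯, (Y ⟶ S.obj X) ≃ₗ[k] Module.Dual k (X ⟶ Y)
  nat_left : ∀ {X Y Y' : 𝒯} (g : Y ⟶ Y') (h : Y' ⟶ S.obj X) (f : X ⟶ Y),
    ε X Y (g ≫ h) f = ε X Y' h (f ≫ g)
  nat_right : ∀ {X X' Y : 𝒯} (u : X ⟶ X') (h : Y ⟶ S.obj X) (f : X' ⟶ Y),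
    ε X' Y (h ≫ S.map u) f = ε X Y h (u ≫ f)

/-- A candidate `(d+2)`-angle `X₀ → X₁ → ⋯ → X_{d+1} → Σᵈ X₀`. -/
structure Candidate (Sd : 𝒯 ⥤ 𝒯) (d : ℕ) where
  obj : ℕ → 𝒯
  hom : ∀ n, obj n ⟶ obj (n + 1)
  conn : obj (d + 1) ⟶ Sd.obj (obj 0)

/-- A `(d+2)`-angulated structure on `𝒯`: an auto-equivalence `Σᵈ` together with a
class of `(d+2)`-angles satisfying (part of) the Geiss–Keller–Oppermann axioms. -/
structure Angulation (d : ℕ) where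
  shift : 𝒯 ⥤ 𝒯
  equiv : shift.IsEquivalence
  IsAngle : Candidate 𝒯 shift d → Prop
  comp_zero : ∀ C, IsAngle C → ∀ n, n + 1 ≤ d → C.hom n ≫ C.hom (n + 1) = 0
  conn_zero : ∀ C, IsAngle C → C.hom d ≫ C.conn = 0
  exists_angle : ∀ {A B : 𝒯} (f : A ⟶ B), ∃ C, IsAngle C ∧
    ∃ (eA : C.obj 0 ≅ A) (eB : C.obj 1 ≅ B), C.hom 0 = eA.hom ≫ f ≫ eB.inv
  hom_exact : ∀ C, IsAngle C → ∀ (W : 𝒯) (n : ℕ), n + 1 ≤ d →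
    Function.Exact (fun a : W ⟶ C.obj n => a ≫ C.hom n)
      (fun a : W ⟶ C.obj (n + 1) => a ≫ C.hom (n + 1))
  hom_exact_last : ∀ C, IsAngle C → ∀ W : 𝒯,
    Function.Exact (fun a : W ⟶ C.obj d => a ≫ C.hom d)
      (fun a : W ⟶ C.obj (d + 1) => a ≫ C.conn)

/-- Condition (b) of the paper. -/
def CondB [HasFiniteBiproducts 𝒯] {d : ℕ} (A : Angulation 𝒯 d) (T : 𝒯) : Prop :=
  ∀ X : 𝒯, Indecomposable' 𝒯 X → (∃ a : T ⟶ X, a ≠ 0) →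
    ∃ C, A.IsAngle C ∧ (∀ i, i ≤ d → InAdd 𝒯 T (C.obj i)) ∧
      Nonempty (C.obj (d + 1) ≅ X) ∧ ∀ a : T ⟶ C.obj (d + 1), a ≫ C.conn = 0

section SerreProofAux

namespace SerreProof

variable {k 𝒯 : Type} [Field k] [Category.{0} 𝒯] [Preadditive 𝒯] [CategoryTheory.Linear k 𝒯]

/-- Type-cast a morphism `T ⟶ T` to `End T`. -/
@[reducible] def toEnd {T : 𝒯} (f : T ⟶ T) : End T := f

lemma op_smul_hom {T X : 𝒯} (m : End T) (a : T ⟶ X) :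
    (MulOpposite.op m) • a = m ≫ a := rfl

lemma smul_hom {T X : 𝒯} (m : (End T)ᵐᵒᵖ) (a : T ⟶ X) :
    m • a = m.unop ≫ a := rfl

lemma post_apply {T X Y : 𝒯} (f : X ⟶ Y) (a : T ⟶ X) :
    postcompHom 𝒯 T f a = a ≫ f := rfl

/-- The canonical map `k → (End T)ᵐᵒᵖ`. -/
def rho (k : Type) [Field k] {𝒯 : Type} [Category.{0} 𝒯] [Preadditive 𝒯]
    [CategoryTheory.Linear k 𝒯] (T : 𝒯) : k →+* (End T)ᵐᵒᵖ where
  toFun c := MulOpposite.op (c • (𝟙 T : End T))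
  map_one' := by
    apply MulOpposite.unop_injective
    show (1 : k) • (𝟙 T : T ⟶ T) = 𝟙 T
    rw [one_smul]
  map_mul' c d := by
    apply MulOpposite.unop_injective
    show ((c * d) • (𝟙 T : T ⟶ T)) = (c • (𝟙 T : T ⟶ T)) ≫ (d • (𝟙 T : T ⟶ T))
    rw [CategoryTheory.Linear.smul_comp, CategoryTheory.Linear.comp_smul,
      Category.comp_id, smul_smul]
  map_zero' := by
    apply MulOpposite.unop_injective
    show (0 : k) • (𝟙 T : T ⟶ T) = 0
    rw [zero_smul]
  map_add' c d := by
    apply MulOpposite.unop_injective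
    show ((c + d) • (𝟙 T : T ⟶ T)) = (c • (𝟙 T : T ⟶ T)) + (d • (𝟙 T : T ⟶ T))
    rw [add_smul]

lemma rho_smul {T X : 𝒯} (c : k) (a : T ⟶ X) : (rho k T c) • a = c • a := by
  show (c • (𝟙 T : T ⟶ T)) ≫ a = c • a
  rw [CategoryTheory.Linear.smul_comp, Category.id_comp]

lemma op_smul_eq_rho_mul {T : 𝒯} (c : k) (f : End T) :
    MulOpposite.op (c • f) = rho k T c * MulOpposite.op f := by
  apply MulOpposite.unop_injective
  show (c • f : T ⟶ T) = (c • (𝟙 T : T ⟶ T)) ≫ f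
  rw [CategoryTheory.Linear.smul_comp, Category.id_comp]

lemma op_smul_eq_rho_mul' {T : 𝒯} (c : k) (f : T ⟶ T) :
    MulOpposite.op (toEnd (c • f)) = rho k T c * MulOpposite.op (toEnd f) := by
  apply MulOpposite.unop_injective
  show (c • f : T ⟶ T) = (c • (𝟙 T : T ⟶ T)) ≫ f
  rw [CategoryTheory.Linear.smul_comp, Category.id_comp]

section PhiInv

variable (SD : SerreData k 𝒯) (T : 𝒯)
variable {X : Type} [AddCommGroup X] [Module (End T)ᵐᵒᵖ X]
variable (ξ : X →+ k)
variable (hξ : ∀ (c : k) (f : End T) (x : X),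
  ξ ((MulOpposite.op (c • f)) • x) = c * ξ ((MulOpposite.op f) • x))

/-- The functional `f ↦ ξ (op f • x)` on `T ⟶ T`. -/
def phiFun (x : X) : Module.Dual k (T ⟶ T) where
  toFun f := ξ ((MulOpposite.op (toEnd f)) • x)
  map_add' f g := by
    show ξ ((MulOpposite.op (toEnd f + toEnd g)) • x) = _
    rw [MulOpposite.op_add, add_smul, ξ.map_add]
  map_smul' c f := hξ c (toEnd f) x

/-- The inverse `Φ⁻¹` of the canonical correspondence: from a functional on `X`
to a `Γ`-linear map `X → (T ⟶ ST)`. -/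
def PhiInv : X →ₗ[(End T)ᵐᵒᵖ] (T ⟶ SD.S.obj T) where
  toFun x := (SD.ε T T).symm (phiFun T ξ hξ x)
  map_add' x y := by
    rw [← map_add]
    congr 1
    apply LinearMap.ext; intro f
    show ξ (_ • (x + y)) = ξ (_ • x) + ξ (_ • y)
    rw [smul_add, ξ.map_add]
  map_smul' m x := by
    apply (SD.ε T T).injective
    apply LinearMap.ext; intro f
    rw [LinearEquiv.apply_symm_apply, smul_hom, SD.nat_left, LinearEquiv.apply_symm_apply]
    show ξ ((MulOpposite.op (toEnd f)) • m • x)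
      = ξ ((MulOpposite.op (toEnd (f ≫ m.unop))) • x)
    rw [← mul_smul]
    have h2 : MulOpposite.op (toEnd f) * m = MulOpposite.op (toEnd (f ≫ m.unop)) := by
      apply MulOpposite.unop_injective
      show m.unop * toEnd f = toEnd (f ≫ m.unop)
      rw [End.mul_def]
    rw [h2]

lemma PhiInv_eval (x : X) (f : T ⟶ T) :
    SD.ε T T (PhiInv SD T ξ hξ x) f = ξ ((MulOpposite.op (toEnd f)) • x) := by
  show SD.ε T T ((SD.ε T T).symm (phiFun T ξ hξ x)) f = _
  rw [LinearEquiv.apply_symm_apply]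
  rfl

end PhiInv

variable (SD : SerreData k 𝒯) (T : 𝒯)

/-- `𝒯(T, ST)` is an injective `Γ`-module. -/
lemma inj_Q : Module.Injective (End T)ᵐᵒᵖ (T ⟶ SD.S.obj T) := by
  constructor
  intro X Y _ _ _ _ i hi g
  letI : Module k X := Module.compHom X (rho k T)
  letI : Module k Y := Module.compHom Y (rho k T)
  let i' : X →ₗ[k] Y :=
    { toFun := i
      map_add' := i.map_add
      map_smul' := fun c x => i.map_smul (rho k T c) x }
  let ξ : X →ₗ[k] k :=
    { toFun := fun x => SD.ε T T (g x) (𝟙 T)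
      map_add' := fun x y => by
        rw [g.map_add, map_add]
        rfl
      map_smul' := fun c x => by
        show SD.ε T T (g ((rho k T c) • x)) (𝟙 T) = c • SD.ε T T (g x) (𝟙 T)
        rw [g.map_smul, rho_smul, map_smul]
        rfl }
  obtain ⟨l, hl⟩ := LinearMap.exists_leftInverse_of_injective i'
    (LinearMap.ker_eq_bot.mpr (by exact hi))
  have hη : ∀ (c : k) (f : End T) (y : Y),
      (ξ.comp l).toAddMonoidHom ((MulOpposite.op (c • f)) • y)
        = c * (ξ.comp l).toAddMonoidHom ((MulOpposite.op f) • y) := by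
    intro c f y
    have h1 : (MulOpposite.op (c • f)) • y = c • ((MulOpposite.op f) • y) := by
      rw [op_smul_eq_rho_mul, mul_smul]; rfl
    rw [h1]
    exact (ξ.comp l).map_smul c _
  refine ⟨PhiInv SD T (ξ.comp l).toAddMonoidHom hη, fun x => ?_⟩
  apply (SD.ε T T).injective
  apply LinearMap.ext; intro f
  rw [PhiInv_eval]
  have h1 : (MulOpposite.op (toEnd f)) • i x = i ((MulOpposite.op (toEnd f)) • x) :=
    (i.map_smul _ x).symm
  rw [h1]
  show ξ (l (i' ((MulOpposite.op (toEnd f)) • x))) = SD.ε T T (g x) f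
  rw [show l (i' ((MulOpposite.op (toEnd f)) • x)) = (MulOpposite.op (toEnd f)) • x from
    DFunLike.congr_fun hl _]
  show SD.ε T T (g ((MulOpposite.op (toEnd f)) • x)) (𝟙 T) = SD.ε T T (g x) f
  rw [g.map_smul, op_smul_hom, SD.nat_left, Category.id_comp]

section Biproducts

variable [HasFiniteBiproducts 𝒯]

/-- Injectivity of `𝒯(T,X)` for `X ∈ add (ST)`. -/
lemma inj_addST (X : 𝒯) (hX : InAdd 𝒯 (SD.S.obj T) X) :
    Module.Injective (End T)ᵐᵒᵖ (T ⟶ X) := by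
  obtain ⟨n, s, r, hsr⟩ := hX
  have hQ := inj_Q SD T
  constructor
  intro A B _ _ _ _ i hi g
  have comp : ∀ j : Fin n, ∃ hj : B →ₗ[(End T)ᵐᵒᵖ] (T ⟶ SD.S.obj T),
      ∀ a, hj (i a) = (postcompHom 𝒯 T (s ≫ biproduct.π _ j)) (g a) := fun j =>
    hQ.out i hi ((postcompHom 𝒯 T (s ≫ biproduct.π _ j)).comp g)
  choose hmap hprop using comp
  refine ⟨(postcompHom 𝒯 T r).comp
    (∑ j, (postcompHom 𝒯 T (biproduct.ι (fun _ : Fin n => SD.S.obj T) j)).comp (hmap j)),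
    fun a => ?_⟩
  simp only [LinearMap.comp_apply, LinearMap.sum_apply, post_apply]
  have hth : ∀ j, hmap j (i a) = g a ≫ s ≫ biproduct.π (fun _ : Fin n => SD.S.obj T) j :=
    fun j => hprop j a
  have expand : (∑ j, hmap j (i a) ≫ biproduct.ι (fun _ : Fin n => SD.S.obj T) j)
      = g a ≫ s := by
    have step : ∀ j ∈ Finset.univ, hmap j (i a) ≫ biproduct.ι (fun _ : Fin n => SD.S.obj T) j
        = (g a ≫ s) ≫ (biproduct.π (fun _ : Fin n => SD.S.obj T) j ≫
            biproduct.ι (fun _ : Fin n => SD.S.obj T) j) := by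
      intro j _
      rw [hth j]
      simp only [Category.assoc]
    rw [Finset.sum_congr rfl step, ← Preadditive.comp_sum, biproduct.total, Category.comp_id]
  rw [expand, Category.assoc, hsr, Category.comp_id]

/-- `𝒯(T,X)` is a finite `Γ`-module, for every `X`. -/
lemma modFinite (hfin : HomFinite k 𝒯) (X : 𝒯) :
    Module.Finite (End T)ᵐᵒᵖ (T ⟶ X) := by
  haveI : FiniteDimensional k (T ⟶ X) := hfin T X
  obtain ⟨S, hS⟩ := (Module.finite_def.mp (inferInstance : Module.Finite k (T ⟶ X)))
  refine ⟨⟨S, ?_⟩⟩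
  rw [eq_top_iff]
  intro a ha'
  clear ha'
  have ha : a ∈ Submodule.span k (↑S : Set (T ⟶ X)) := hS ▸ Submodule.mem_top
  induction ha using Submodule.span_induction with
  | mem y hy => exact Submodule.subset_span hy
  | zero => exact zero_mem _
  | add y z _ _ hy hz => exact add_mem hy hz
  | smul c y _ hy =>
      rw [← rho_smul (k := k)]
      exact Submodule.smul_mem _ _ hy

end Biproducts

/-- Surjectivity of the core map `A → End_Γ(Q)`. -/
lemma core_surj (hfin : HomFinite k 𝒯)
    (h : (T ⟶ SD.S.obj T) →ₗ[(End T)ᵐᵒᵖ] (T ⟶ SD.S.obj T)) :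
    ∃ c : T ⟶ T, ∀ a : T ⟶ SD.S.obj T, h a = a ≫ SD.S.map c := by
  haveI : FiniteDimensional k (T ⟶ T) := hfin T T
  have hk : ∀ (c : k) (a : T ⟶ SD.S.obj T), h (c • a) = c • h a := by
    intro c a
    rw [← rho_smul (k := k), h.map_smul, rho_smul]
  let Λ : Module.Dual k (Module.Dual k (T ⟶ T)) :=
    { toFun := fun φ => SD.ε T T (h ((SD.ε T T).symm φ)) (𝟙 T)
      map_add' := fun φ ψ => by
        rw [map_add, h.map_add, map_add]
        rfl
      map_smul' := fun c φ => by
        rw [map_smul, hk, map_smul]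
        rfl }
  refine ⟨(Module.evalEquiv k (T ⟶ T)).symm Λ, fun a => ?_⟩
  apply (SD.ε T T).injective
  apply LinearMap.ext; intro f
  set c := (Module.evalEquiv k (T ⟶ T)).symm Λ with hc
  have e1 : SD.ε T T (h a) f = SD.ε T T (f ≫ h a) (𝟙 T) := by
    rw [SD.nat_left, Category.id_comp]
  have e2 : (f ≫ h a : T ⟶ SD.S.obj T) = h (f ≫ a) := by
    rw [← op_smul_hom (toEnd f), ← op_smul_hom (toEnd f), ← h.map_smul]
  have e3 : SD.ε T T (h (f ≫ a)) (𝟙 T) = Λ (SD.ε T T (f ≫ a)) := by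
    show _ = SD.ε T T (h ((SD.ε T T).symm (SD.ε T T (f ≫ a)))) (𝟙 T)
    rw [LinearEquiv.symm_apply_apply]
  have e4 : Λ (SD.ε T T (f ≫ a)) = (SD.ε T T (f ≫ a)) c :=
    (Module.apply_evalEquiv_symm_apply k (T ⟶ T) (SD.ε T T (f ≫ a)) Λ).symm
  rw [e1, e2, e3, e4, SD.nat_left, SD.nat_right]

/-- The base bijectivity at `(ST, ST)`. -/
lemma bij_base (hfin : HomFinite k 𝒯) :
    Function.Bijective
      (fun g : SD.S.obj T ⟶ SD.S.obj T => postcompHom 𝒯 T g) := by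
  letI := SD.equiv
  constructor
  · intro g g' hgg'
    obtain ⟨c, rfl⟩ := SD.S.map_surjective g
    obtain ⟨c', rfl⟩ := SD.S.map_surjective g'
    have key : ∀ (a : T ⟶ SD.S.obj T) (f : T ⟶ T),
        SD.ε T T a (c ≫ f) = SD.ε T T a (c' ≫ f) := by
      intro a f
      rw [← SD.nat_right, ← SD.nat_right]
      have : a ≫ SD.S.map c = a ≫ SD.S.map c' := DFunLike.congr_fun hgg' a
      rw [this]
    have hcf : ∀ f : T ⟶ T, c ≫ f = c' ≫ f := by
      intro f
      have sep : ∀ φ : Module.Dual k (T ⟶ T), φ (c ≫ f - c' ≫ f) = 0 := by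
        intro φ
        rw [map_sub]
        have := key ((SD.ε T T).symm φ) f
        rw [LinearEquiv.apply_symm_apply] at this
        rw [this, sub_self]
      have := (Module.forall_dual_apply_eq_zero_iff k (c ≫ f - c' ≫ f)).mp sep
      exact sub_eq_zero.mp this
    have := hcf (𝟙 T)
    rw [Category.comp_id, Category.comp_id] at this
    rw [this]
  · intro ψ
    obtain ⟨c, hc⟩ := core_surj SD T hfin ψ
    exact ⟨SD.S.map c, (LinearMap.ext fun a => (hc a).symm : _)⟩

/-- A retract of a bijective map is bijective. -/
lemma bij_of_retract {α β α' β' : Type} (u : α → β) (u' : α' → β')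
    (i : α → α') (p : α' → α) (j : β → β') (q : β' → β)
    (hpi : ∀ a, p (i a) = a) (hqj : ∀ b, q (j b) = b)
    (sq1 : ∀ a, u' (i a) = j (u a)) (sq2 : ∀ a', u (p a') = q (u' a'))
    (h : Function.Bijective u') : Function.Bijective u := by
  constructor
  · intro a b hab
    have h1 : u' (i a) = u' (i b) := by rw [sq1, sq1, hab]
    have h2 := h.1 h1
    rw [← hpi a, ← hpi b, h2]
  · intro b
    obtain ⟨a', ha'⟩ := h.2 (j b)
    refine ⟨p a', ?_⟩
    rw [sq2, ha', hqj]

section Biproducts2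

variable [HasFiniteBiproducts 𝒯]

lemma bij_target_pi (X : 𝒯) {n : ℕ} (Y : Fin n → 𝒯)
    (h : ∀ j, Function.Bijective (fun f : X ⟶ Y j => postcompHom 𝒯 T f)) :
    Function.Bijective (fun f : X ⟶ biproduct Y => postcompHom 𝒯 T f) := by
  constructor
  · intro f g hfg
    apply biproduct.hom_ext
    intro j
    apply (h j).1
    apply LinearMap.ext; intro a
    show a ≫ f ≫ biproduct.π Y j = a ≫ g ≫ biproduct.π Y j
    rw [← Category.assoc, ← Category.assoc]
    exact congrArg (fun t => t ≫ biproduct.π Y j) (DFunLike.congr_fun hfg a)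
  · intro ψ
    choose gj hgj using fun j => (h j).2 ((postcompHom 𝒯 T (biproduct.π Y j)).comp ψ)
    refine ⟨biproduct.lift gj, LinearMap.ext fun a => ?_⟩
    apply biproduct.hom_ext
    intro j
    have h1 := DFunLike.congr_fun (hgj j) a
    show (a ≫ biproduct.lift gj) ≫ biproduct.π Y j = ψ a ≫ biproduct.π Y j
    rw [Category.assoc, biproduct.lift_π]
    exact h1

lemma bij_source_pi (Y : 𝒯) {m : ℕ} (X : Fin m → 𝒯)
    (h : ∀ i, Function.Bijective (fun f : X i ⟶ Y => postcompHom 𝒯 T f)) :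
    Function.Bijective (fun f : biproduct X ⟶ Y => postcompHom 𝒯 T f) := by
  constructor
  · intro f g hfg
    apply biproduct.hom_ext'
    intro i
    apply (h i).1
    apply LinearMap.ext; intro a
    show a ≫ biproduct.ι X i ≫ f = a ≫ biproduct.ι X i ≫ g
    rw [← Category.assoc, ← Category.assoc]
    exact DFunLike.congr_fun hfg (a ≫ biproduct.ι X i)
  · intro ψ
    choose gi hgi using fun i => (h i).2 (ψ.comp (postcompHom 𝒯 T (biproduct.ι X i)))
    refine ⟨biproduct.desc gi, LinearMap.ext fun a => ?_⟩
    show a ≫ biproduct.desc gi = ψ a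
    have ha : (∑ i, (a ≫ biproduct.π X i) ≫ biproduct.ι X i) = a := by
      have hstep : ∀ i ∈ Finset.univ, (a ≫ biproduct.π X i) ≫ biproduct.ι X i
          = a ≫ (biproduct.π X i ≫ biproduct.ι X i) := fun i _ => by rw [Category.assoc]
      rw [Finset.sum_congr rfl hstep, ← Preadditive.comp_sum, biproduct.total,
        Category.comp_id]
    calc a ≫ biproduct.desc gi
        = (∑ i, (a ≫ biproduct.π X i) ≫ biproduct.ι X i) ≫ biproduct.desc gi := by rw [ha]
      _ = ∑ i, (a ≫ biproduct.π X i) ≫ gi i := by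
            rw [Preadditive.sum_comp]
            refine Finset.sum_congr rfl fun i _ => ?_
            rw [Category.assoc, biproduct.ι_desc]
      _ = ∑ i, ψ ((a ≫ biproduct.π X i) ≫ biproduct.ι X i) := by
            refine Finset.sum_congr rfl fun i _ => ?_
            exact (DFunLike.congr_fun (hgi i) (a ≫ biproduct.π X i) : _)
      _ = ψ (∑ i, (a ≫ biproduct.π X i) ≫ biproduct.ι X i) := (map_sum ψ _ _).symm
      _ = ψ a := by rw [ha]

lemma bij_retract_source {X X' Y : 𝒯} (s : X ⟶ X') (r : X' ⟶ X) (hsr : s ≫ r = 𝟙 X)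
    (h : Function.Bijective (fun f : X' ⟶ Y => postcompHom 𝒯 T f)) :
    Function.Bijective (fun f : X ⟶ Y => postcompHom 𝒯 T f) := by
  apply bij_of_retract (fun f : X ⟶ Y => postcompHom 𝒯 T f)
    (fun f : X' ⟶ Y => postcompHom 𝒯 T f)
    (fun f => r ≫ f) (fun f' => s ≫ f')
    (fun ψ => ψ.comp (postcompHom 𝒯 T r)) (fun χ => χ.comp (postcompHom 𝒯 T s))
    ?_ ?_ ?_ ?_ h
  · intro f
    show s ≫ r ≫ f = f
    rw [← Category.assoc, hsr, Category.id_comp]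
  · intro ψ
    apply LinearMap.ext; intro a
    show ψ ((a ≫ s) ≫ r) = ψ a
    rw [Category.assoc, hsr, Category.comp_id]
  · intro f
    apply LinearMap.ext; intro a
    show a ≫ r ≫ f = (a ≫ r) ≫ f
    rw [Category.assoc]
  · intro f'
    apply LinearMap.ext; intro a
    show a ≫ s ≫ f' = (a ≫ s) ≫ f'
    rw [Category.assoc]

lemma bij_retract_target {X Y Y' : 𝒯} (s : Y ⟶ Y') (r : Y' ⟶ Y) (hsr : s ≫ r = 𝟙 Y)
    (h : Function.Bijective (fun f : X ⟶ Y' => postcompHom 𝒯 T f)) :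
    Function.Bijective (fun f : X ⟶ Y => postcompHom 𝒯 T f) := by
  apply bij_of_retract (fun f : X ⟶ Y => postcompHom 𝒯 T f)
    (fun f : X ⟶ Y' => postcompHom 𝒯 T f)
    (fun f => f ≫ s) (fun f' => f' ≫ r)
    (fun ψ => (postcompHom 𝒯 T s).comp ψ) (fun χ => (postcompHom 𝒯 T r).comp χ)
    ?_ ?_ ?_ ?_ h
  · intro f
    show (f ≫ s) ≫ r = f
    rw [Category.assoc, hsr, Category.comp_id]
  · intro ψ
    apply LinearMap.ext; intro a
    show (ψ a ≫ s) ≫ r = ψ a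
    rw [Category.assoc, hsr, Category.comp_id]
  · intro f
    apply LinearMap.ext; intro a
    show a ≫ f ≫ s = (a ≫ f) ≫ s
    rw [Category.assoc]
  · intro f'
    apply LinearMap.ext; intro a
    show a ≫ f' ≫ r = (a ≫ f') ≫ r
    rw [Category.assoc]

lemma bij_add (hfin : HomFinite k 𝒯) {X Y : 𝒯}
    (hX : InAdd 𝒯 (SD.S.obj T) X) (hY : InAdd 𝒯 (SD.S.obj T) Y) :
    Function.Bijective (fun f : X ⟶ Y => postcompHom 𝒯 T f) := by
  obtain ⟨m, sX, rX, hXr⟩ := hX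
  obtain ⟨n, sY, rY, hYr⟩ := hY
  have b0 := bij_base SD T hfin
  have b1 : Function.Bijective (fun f : biproduct (fun _ : Fin m => SD.S.obj T) ⟶
      biproduct (fun _ : Fin n => SD.S.obj T) => postcompHom 𝒯 T f) :=
    bij_source_pi T _ _ (fun _ => bij_target_pi T _ _ (fun _ => b0))
  have b2 := bij_retract_source T sX rX hXr b1
  exact bij_retract_target T sY rY hYr b2

end Biproducts2

/-- Finite `Γ`-modules are finite dimensional over `k`. -/
lemma kfinite (hfin : HomFinite k 𝒯) (M : Type) [AddCommGroup M] [Module (End T)ᵐᵒᵖ M]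
    (hM : Module.Finite (End T)ᵐᵒᵖ M) :
    let _i : Module k M := Module.compHom M (rho k T)
    Module.Finite k M := by
  intro _i
  classical
  haveI : FiniteDimensional k (T ⟶ T) := hfin T T
  obtain ⟨S, hS⟩ := Module.finite_def.mp hM
  obtain ⟨B, hB⟩ := Module.finite_def.mp (inferInstance : Module.Finite k (T ⟶ T))
  refine ⟨⟨(B ×ˢ S).image (fun p => (MulOpposite.op (toEnd p.1)) • p.2), ?_⟩⟩
  rw [eq_top_iff]
  intro x hx'
  clear hx'
  set N := Submodule.span k
    (↑((B ×ˢ S).image (fun p => (MulOpposite.op (toEnd p.1)) • p.2)) : Set M) with hN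
  show x ∈ N
  have key : ∀ (γ : (End T)ᵐᵒᵖ) (y : M), y ∈ (↑S : Set M) → γ • y ∈ N := by
    intro γ y hy
    have hγ : γ.unop ∈ Submodule.span k (↑B : Set (T ⟶ T)) := hB ▸ Submodule.mem_top
    have main : ∀ b ∈ Submodule.span k (↑B : Set (T ⟶ T)),
        (MulOpposite.op (toEnd b)) • y ∈ N := by
      intro b hb
      induction hb using Submodule.span_induction with
      | mem u hu =>
          refine Submodule.subset_span ?_
          refine Finset.mem_coe.mpr (Finset.mem_image.mpr ⟨(u, y), ?_, rfl⟩)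
          exact Finset.mem_product.mpr ⟨Finset.mem_coe.mp hu, hy⟩
      | zero =>
          have h0 : (MulOpposite.op (toEnd (0 : T ⟶ T))) • y = 0 := by
            rw [show MulOpposite.op (toEnd (0 : T ⟶ T)) = (0 : (End T)ᵐᵒᵖ) from rfl,
              zero_smul]
          rw [h0]
          exact zero_mem N
      | add u u' _ _ hu hu' =>
          have h0 : (MulOpposite.op (toEnd (u + u'))) • y
              = (MulOpposite.op (toEnd u)) • y + (MulOpposite.op (toEnd u')) • y := by
            rw [show MulOpposite.op (toEnd (u + u'))
              = MulOpposite.op (toEnd u) + MulOpposite.op (toEnd u') from rfl, add_smul]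
          rw [h0]
          exact add_mem hu hu'
      | smul c u _ hu =>
          have h0 : (MulOpposite.op (toEnd (c • u))) • y
              = c • ((MulOpposite.op (toEnd u)) • y) := by
            rw [op_smul_eq_rho_mul', mul_smul]
            rfl
          rw [h0]
          exact N.smul_mem c hu
    have h2 := main γ.unop hγ
    rwa [show MulOpposite.op (toEnd γ.unop) = γ from MulOpposite.op_unop γ] at h2
  have hx : x ∈ Submodule.span (End T)ᵐᵒᵖ (↑S : Set M) := hS ▸ Submodule.mem_top
  obtain ⟨t, c, v, hv⟩ := Submodule.mem_span_set'.mp hx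
  rw [← hv]
  exact Submodule.sum_mem N fun i _ => key (c i) (v i) (v i).2

end SerreProof

end SerreProofAux

/-- The functor `𝒯(T,-)` restricts to an equivalence `add (ST) ≃ inj (mod Γ)`:
it is fully faithful on `add (ST)` (via `Γ`-linear maps), sends objects of `add (ST)` to
finite injective `Γ`-modules, and every finite injective `Γ`-module is isomorphic to the
image of an object of `add (ST)`. -/
theorem homFunctor_equiv_add_ST_inj
    (k 𝒯 : Type) [Field k] [Category.{0} 𝒯] [Preadditive 𝒯] [CategoryTheory.Linear k 𝒯]
    [HasFiniteBiproducts 𝒯] [IsIdempotentComplete 𝒯]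
    (hfin : HomFinite k 𝒯) (SD : SerreData k 𝒯) (T : 𝒯) :
    (∀ X Y : 𝒯, InAdd 𝒯 (SD.S.obj T) X → InAdd 𝒯 (SD.S.obj T) Y →
      Function.Bijective (fun f : X ⟶ Y => postcompHom 𝒯 T f)) ∧
    (∀ X : 𝒯, InAdd 𝒯 (SD.S.obj T) X →
      Module.Finite (End T)ᵐᵒᵖ (T ⟶ X) ∧ Module.Injective (End T)ᵐᵒᵖ (T ⟶ X)) ∧
    (∀ M : ModuleCat (End T)ᵐᵒᵖ, Module.Finite (End T)ᵐᵒᵖ M →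
      Module.Injective (End T)ᵐᵒᵖ M →
      ∃ X : 𝒯, InAdd 𝒯 (SD.S.obj T) X ∧ Nonempty (M ≅ homMod 𝒯 T X)) := by
  classical
  refine ⟨?_, ?_, ?_⟩
  · intro X Y hX hY
    exact SerreProof.bij_add SD T hfin hX hY
  · intro X hX
    exact ⟨SerreProof.modFinite T hfin X, SerreProof.inj_addST SD T X hX⟩
  · intro M hMfin hMinj
    letI : Module k ↑M := Module.compHom ↑M (SerreProof.rho k T)
    haveI hkfin : Module.Finite k ↑M := SerreProof.kfinite T hfin ↑M hMfin
    haveI : FiniteDimensional k (T ⟶ T) := hfin T T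
    haveI : FiniteDimensional k ↑M := hkfin
    obtain ⟨D, hD⟩ := Module.finite_def.mp
      (inferInstance : Module.Finite k (Module.Dual k ↑M))
    set n := D.card with hn
    let v : Fin n → Module.Dual k ↑M := fun i => (D.equivFin.symm i : Module.Dual k ↑M)
    have sep : ∀ x : ↑M, (∀ i, v i x = 0) → x = 0 := by
      intro x hx
      apply (Module.forall_dual_apply_eq_zero_iff k x).mp
      intro φ
      have hφ : φ ∈ Submodule.span k (↑D : Set (Module.Dual k ↑M)) :=
        hD ▸ Submodule.mem_top
      induction hφ using Submodule.span_induction with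
      | mem ψ hψ =>
          have hψ' : ψ = v (D.equivFin ⟨ψ, Finset.mem_coe.mp hψ⟩) := by
            show ψ = ((D.equivFin.symm (D.equivFin ⟨ψ, Finset.mem_coe.mp hψ⟩))
              : Module.Dual k ↑M)
            rw [Equiv.symm_apply_apply]
          rw [hψ']
          exact hx _
      | zero => rfl
      | add ψ χ _ _ h1 h2 => rw [LinearMap.add_apply, h1, h2, add_zero]
      | smul c ψ _ h1 => rw [LinearMap.smul_apply, h1, smul_zero]
    have hvi : ∀ (i : Fin n) (c : k) (f : End T) (x : ↑M),
        (v i).toAddMonoidHom ((MulOpposite.op (c • f)) • x)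
          = c * (v i).toAddMonoidHom ((MulOpposite.op f) • x) := by
      intro i c f x
      have h1 : (MulOpposite.op (c • f)) • x = c • ((MulOpposite.op f) • x) := by
        rw [SerreProof.op_smul_eq_rho_mul, mul_smul]
        rfl
      rw [h1]
      exact (v i).map_smul c _
    let Fi : Fin n → (↑M →ₗ[(End T)ᵐᵒᵖ] (T ⟶ SD.S.obj T)) := fun i =>
      SerreProof.PhiInv SD T (v i).toAddMonoidHom (hvi i)
    let F : ↑M →ₗ[(End T)ᵐᵒᵖ] (T ⟶ biproduct (fun _ : Fin n => SD.S.obj T)) :=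
      ∑ i, (postcompHom 𝒯 T (biproduct.ι (fun _ : Fin n => SD.S.obj T) i)).comp (Fi i)
    have hFcomp : ∀ (x : ↑M) (j : Fin n),
        F x ≫ biproduct.π (fun _ : Fin n => SD.S.obj T) j = Fi j x := by
      intro x j
      have hFx : F x = ∑ i, Fi i x ≫ biproduct.ι (fun _ : Fin n => SD.S.obj T) i := by
        simp only [F, LinearMap.sum_apply, LinearMap.comp_apply, SerreProof.post_apply]
      rw [hFx, Preadditive.sum_comp]
      rw [Finset.sum_eq_single j
        (fun i _ hij => by rw [Category.assoc, biproduct.ι_π_ne _ hij, Limits.comp_zero])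
        (fun hj => absurd (Finset.mem_univ j) hj)]
      rw [Category.assoc, biproduct.ι_π_self, Category.comp_id]
    have hFker : ∀ x : ↑M, F x = 0 → x = 0 := by
      intro x hx
      apply sep
      intro i
      have h0 : Fi i x = 0 := by
        rw [← hFcomp x i, hx, Limits.zero_comp]
      have h1 := SerreProof.PhiInv_eval SD T (v i).toAddMonoidHom (hvi i) x (𝟙 T)
      rw [show SerreProof.PhiInv SD T (v i).toAddMonoidHom (hvi i) x = Fi i x from rfl,
        h0, map_zero] at h1
      have h2 : (MulOpposite.op (SerreProof.toEnd (𝟙 T))) • x = x := by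
        rw [show MulOpposite.op (SerreProof.toEnd (𝟙 T)) = (1 : (End T)ᵐᵒᵖ) from rfl,
          one_smul]
      rw [h2] at h1
      exact h1.symm
    have hFinj : Function.Injective F := by
      intro x y hxy
      have h0 := hFker (x - y) (by rw [map_sub, hxy, sub_self])
      exact sub_eq_zero.mp h0
    obtain ⟨G, hG⟩ := hMinj.out F hFinj LinearMap.id
    have hG' : ∀ x : ↑M, G (F x) = x := fun x => hG x
    have hWadd : InAdd 𝒯 (SD.S.obj T) (biproduct (fun _ : Fin n => SD.S.obj T)) :=
      ⟨n, 𝟙 _, 𝟙 _, Category.id_comp _⟩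
    have bW := SerreProof.bij_add SD T hfin hWadd hWadd
    obtain ⟨g, hg⟩ := bW.2 (F.comp G)
    have hga : ∀ t : T ⟶ biproduct (fun _ : Fin n => SD.S.obj T), t ≫ g = F (G t) :=
      fun t => DFunLike.congr_fun hg t
    have hgg : g ≫ g = g := by
      apply bW.1
      apply LinearMap.ext; intro a
      show a ≫ g ≫ g = a ≫ g
      calc a ≫ g ≫ g = (a ≫ g) ≫ g := by rw [Category.assoc]
        _ = F (G (a ≫ g)) := hga _
        _ = F (G (F (G a))) := by rw [hga a]
        _ = F (G a) := by rw [hG' (G a)]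
        _ = a ≫ g := (hga a).symm
    obtain ⟨Xo, io, eo, hie, hei⟩ :=
      CategoryTheory.IsIdempotentComplete.idempotents_split
        (biproduct (fun _ : Fin n => SD.S.obj T)) g hgg
    refine ⟨Xo, ⟨n, io, eo, hie⟩, ?_⟩
    let u : ↑M →ₗ[(End T)ᵐᵒᵖ] (T ⟶ Xo) := (postcompHom 𝒯 T eo).comp F
    let w : (T ⟶ Xo) →ₗ[(End T)ᵐᵒᵖ] ↑M := G.comp (postcompHom 𝒯 T io)
    have huw : ∀ x : ↑M, w (u x) = x := by
      intro x
      show G ((F x ≫ eo) ≫ io) = x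
      rw [Category.assoc, hei, hga (F x), hG' (G (F x)), hG' x]
    have h5 : io ≫ g = io := by
      rw [← hei, ← Category.assoc, hie, Category.id_comp]
    have hwu : ∀ y : T ⟶ Xo, u (w y) = y := by
      intro y
      show F (G (y ≫ io)) ≫ eo = y
      calc F (G (y ≫ io)) ≫ eo
          = ((y ≫ io) ≫ g) ≫ eo := by rw [← hga]
        _ = (y ≫ (io ≫ g)) ≫ eo := by rw [Category.assoc y io g]
        _ = (y ≫ io) ≫ eo := by rw [h5]
        _ = y := by rw [Category.assoc, hie, Category.comp_id]
    let e : ↑M ≃ₗ[(End T)ᵐᵒᵖ] (T ⟶ Xo) :=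
      LinearEquiv.ofLinear u w (LinearMap.ext hwu) (LinearMap.ext huw)
    exact ⟨e.toModuleIso⟩
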